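/- For a square laptop (L = 1) on a table with sides at least 1, the minimum footprint area 1/4 is attained exactly when the center of the laptop is at a corner of the table, for every orientation. -/

import Mathlib

open Real MeasureTheory
open Set
open scoped ENNReal

/-- The unit square centered at `c`, rotated by `θ`. -/
def unitSquare (c : ℝ × ℝ) (θ : ℝ) : Set (ℝ × ℝ) :=
  {p | |Real.cos θ * (p.1 - c.1) + Real.sin θ * (p.2 - c.2)| ≤ 1 / 2 ∧
       |(-Real.sin θ) * (p.1 - c.1) + Real.cos θ * (p.2 - c.2)| ≤ 1 / 2}

-- disk bound
lemma disk_bound {p : ℝ × ℝ} {θ : ℝ} {z : ℝ × ℝ} (hz : z ∈ unitSquare p θ) :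
    (z.1 - p.1)^2 + (z.2 - p.2)^2 ≤ 1/2 := by
  obtain ⟨h1, h2⟩ := hz
  have e1 := abs_le.mp h1
  have e2 := abs_le.mp h2
  have hpy := Real.sin_sq_add_cos_sq θ
  nlinarith [sq_nonneg (Real.cos θ * (z.1 - p.1) + Real.sin θ * (z.2 - p.2)),
    sq_nonneg ((-Real.sin θ) * (z.1 - p.1) + Real.cos θ * (z.2 - p.2))]

-- axis-aligned square inside
lemma square_subset {p : ℝ × ℝ} {θ : ℝ} {z : ℝ × ℝ}
    (hx : |z.1 - p.1| ≤ Real.sqrt 2 / 4) (hy : |z.2 - p.2| ≤ Real.sqrt 2 / 4) :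
    z ∈ unitSquare p θ := by
  have h2 : Real.sqrt 2 ^ 2 = 2 := Real.sq_sqrt (by norm_num)
  have h2n : (1:ℝ) ≤ Real.sqrt 2 := by nlinarith [Real.sqrt_nonneg 2]
  have habs : |Real.cos θ| + |Real.sin θ| ≤ Real.sqrt 2 := by
    nlinarith [Real.sin_sq_add_cos_sq θ, sq_abs (Real.sin θ), sq_abs (Real.cos θ),
      sq_nonneg (|Real.cos θ| - |Real.sin θ|), abs_nonneg (Real.sin θ), abs_nonneg (Real.cos θ),
      Real.sqrt_nonneg 2]
  constructor
  · calc |Real.cos θ * (z.1 - p.1) + Real.sin θ * (z.2 - p.2)|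
        ≤ |Real.cos θ| * |z.1 - p.1| + |Real.sin θ| * |z.2 - p.2| := by
          rw [← abs_mul, ← abs_mul]; exact abs_add_le _ _
      _ ≤ 1/2 := by nlinarith [abs_nonneg (Real.sin θ), abs_nonneg (Real.cos θ),
          abs_nonneg (z.1 - p.1), abs_nonneg (z.2 - p.2)]
  · calc |(-Real.sin θ) * (z.1 - p.1) + Real.cos θ * (z.2 - p.2)|
        ≤ |(-Real.sin θ)| * |z.1 - p.1| + |Real.cos θ| * |z.2 - p.2| := by
          rw [← abs_mul, ← abs_mul]; exact abs_add_le _ _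
      _ ≤ 1/2 := by rw [abs_neg]; nlinarith [abs_nonneg (Real.sin θ), abs_nonneg (Real.cos θ),
          abs_nonneg (z.1 - p.1), abs_nonneg (z.2 - p.2)]

-- diamond inside
lemma diamond_subset {p : ℝ × ℝ} {θ : ℝ} {z : ℝ × ℝ}
    (h : |z.1 - p.1| + |z.2 - p.2| ≤ 1/2) : z ∈ unitSquare p θ := by
  have hc := Real.abs_cos_le_one θ
  have hs := Real.abs_sin_le_one θ
  have hx := abs_nonneg (z.1 - p.1)
  have hy := abs_nonneg (z.2 - p.2)
  constructor
  · calc |Real.cos θ * (z.1 - p.1) + Real.sin θ * (z.2 - p.2)|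
        ≤ |Real.cos θ| * |z.1 - p.1| + |Real.sin θ| * |z.2 - p.2| := by
          rw [← abs_mul, ← abs_mul]; exact abs_add_le _ _
      _ ≤ 1/2 := by nlinarith
  · calc |(-Real.sin θ) * (z.1 - p.1) + Real.cos θ * (z.2 - p.2)|
        ≤ |(-Real.sin θ)| * |z.1 - p.1| + |Real.cos θ| * |z.2 - p.2| := by
          rw [← abs_mul, ← abs_mul]; exact abs_add_le _ _
      _ ≤ 1/2 := by rw [abs_neg]; nlinarith

lemma measurableSet_unitSquare (p : ℝ × ℝ) (θ : ℝ) : MeasurableSet (unitSquare p θ) := by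
  unfold unitSquare
  rw [Set.setOf_and]
  apply MeasurableSet.inter
  · exact measurableSet_le (by fun_prop) measurable_const
  · exact measurableSet_le (by fun_prop) measurable_const
lemma vol_preimage_affine (m11 m12 m21 m22 v1 v2 : ℝ)
    (hdet : m11 * m22 - m12 * m21 = 1 ∨ m11 * m22 - m12 * m21 = -1) (s : Set (ℝ × ℝ)) :
    volume ((fun z : ℝ × ℝ => (m11 * z.1 + m12 * z.2 + v1, m21 * z.1 + m22 * z.2 + v2)) ⁻¹' s)
      = volume s := by
  set L := Matrix.toLin (Module.Basis.finTwoProd ℝ) (Module.Basis.finTwoProd ℝ) !![m11, m12; m21, m22] with hL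
  have hdetL : LinearMap.det L = m11*m22 - m12*m21 := by
    rw [hL, LinearMap.det_toLin, Matrix.det_fin_two_of]
  have hdet1 : |(LinearMap.det L)⁻¹| = 1 := by
    rcases hdet with h | h <;> rw [hdetL, h] <;> norm_num
  have hne : LinearMap.det L ≠ 0 := by
    rcases hdet with h | h <;> rw [hdetL, h] <;> norm_num
  have key : (fun z : ℝ × ℝ => (m11 * z.1 + m12 * z.2 + v1, m21 * z.1 + m22 * z.2 + v2))
      = (fun w : ℝ × ℝ => w + (v1, v2)) ∘ L := by
    funext z
    simp [hL, Matrix.toLin_finTwoProd_apply, Prod.ext_iff]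
  rw [key, Set.preimage_comp, Measure.addHaar_preimage_linearMap volume hne,
    measure_preimage_add_right volume (v1, v2) s, hdet1]
  simp

/-- rotation by +90° about `p` -/
noncomputable def rot (p : ℝ × ℝ) (z : ℝ × ℝ) : ℝ × ℝ := (p.1 + p.2 - z.2, z.1 - p.1 + p.2)

/-- rotation by -90° about `p` (inverse of `rot`) -/
noncomputable def rotInv (p : ℝ × ℝ) (z : ℝ × ℝ) : ℝ × ℝ := (z.2 - p.2 + p.1, p.1 + p.2 - z.1)

lemma rot_rotInv (p z : ℝ × ℝ) : rot p (rotInv p z) = z := by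
  simp [rot, rotInv, Prod.ext_iff]

lemma rotInv_rot (p z : ℝ × ℝ) : rotInv p (rot p z) = z := by
  simp [rot, rotInv, Prod.ext_iff]

lemma vol_preimage_rot (p : ℝ × ℝ) (s : Set (ℝ × ℝ)) : volume (rot p ⁻¹' s) = volume s := by
  have : rot p = fun z : ℝ × ℝ => (0 * z.1 + (-1) * z.2 + (p.1 + p.2), 1 * z.1 + 0 * z.2 + (p.2 - p.1)) := by
    funext z; simp [rot, Prod.ext_iff]; constructor <;> ring
  rw [this, vol_preimage_affine 0 (-1) 1 0 _ _ (by norm_num)]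

lemma vol_preimage_rotInv (p : ℝ × ℝ) (s : Set (ℝ × ℝ)) : volume (rotInv p ⁻¹' s) = volume s := by
  have : rotInv p = fun z : ℝ × ℝ => (0 * z.1 + 1 * z.2 + (p.1 - p.2), (-1) * z.1 + 0 * z.2 + (p.1 + p.2)) := by
    funext z; simp [rotInv, Prod.ext_iff]; constructor <;> ring
  rw [this, vol_preimage_affine 0 1 (-1) 0 _ _ (by norm_num)]

lemma rot_mem_unitSquare {p : ℝ × ℝ} {θ : ℝ} {z : ℝ × ℝ} :
    rot p z ∈ unitSquare p θ ↔ z ∈ unitSquare p θ := by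
  simp only [unitSquare, rot, Set.mem_setOf_eq]
  have e1 : Real.cos θ * ((p.1 + p.2 - z.2) - p.1) + Real.sin θ * ((z.1 - p.1 + p.2) - p.2)
      = -((-Real.sin θ) * (z.1 - p.1) + Real.cos θ * (z.2 - p.2)) := by ring
  have e2 : (-Real.sin θ) * ((p.1 + p.2 - z.2) - p.1) + Real.cos θ * ((z.1 - p.1 + p.2) - p.2)
      = Real.cos θ * (z.1 - p.1) + Real.sin θ * (z.2 - p.2) := by ring
  rw [e1, e2, abs_neg]
  exact and_comm

lemma rotInv_mem_unitSquare {p : ℝ × ℝ} {θ : ℝ} {z : ℝ × ℝ} :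
    rotInv p z ∈ unitSquare p θ ↔ z ∈ unitSquare p θ := by
  constructor
  · intro h
    have := (rot_mem_unitSquare (p := p) (θ := θ) (z := rotInv p z)).2 h
    rwa [rot_rotInv] at this
  · intro h
    rw [← rot_rotInv p z] at h
    exact rot_mem_unitSquare.1 h

lemma vol_unitSquare (p : ℝ × ℝ) (θ : ℝ) : volume (unitSquare p θ) = 1 := by
  have key : unitSquare p θ = (fun z : ℝ × ℝ =>
      (Real.cos θ * z.1 + Real.sin θ * z.2 + (-(Real.cos θ * p.1) - Real.sin θ * p.2),
       (-Real.sin θ) * z.1 + Real.cos θ * z.2 + (Real.sin θ * p.1 - Real.cos θ * p.2)))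
      ⁻¹' (Set.Icc (-(1/2) : ℝ) (1/2) ×ˢ Set.Icc (-(1/2) : ℝ) (1/2)) := by
    ext z
    simp only [unitSquare, Set.mem_setOf_eq, Set.mem_preimage, Set.mem_prod, Set.mem_Icc, ← abs_le]
    have e1 : Real.cos θ * z.1 + Real.sin θ * z.2 + (-(Real.cos θ * p.1) - Real.sin θ * p.2)
        = Real.cos θ * (z.1 - p.1) + Real.sin θ * (z.2 - p.2) := by ring
    have e2 : (-Real.sin θ) * z.1 + Real.cos θ * z.2 + (Real.sin θ * p.1 - Real.cos θ * p.2)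
        = (-Real.sin θ) * (z.1 - p.1) + Real.cos θ * (z.2 - p.2) := by ring
    rw [e1, e2]
  rw [key, vol_preimage_affine _ _ _ _ _ _ (by left; nlinarith [Real.sin_sq_add_cos_sq θ])]
  rw [Measure.volume_eq_prod, Measure.prod_prod, Real.volume_Icc]
  norm_num

lemma null_vline (c : ℝ) : volume {z : ℝ × ℝ | z.1 = c} = 0 := by
  have : {z : ℝ × ℝ | z.1 = c} = ({c} : Set ℝ) ×ˢ (Set.univ : Set ℝ) := by
    ext ⟨z1, z2⟩; simp [Set.mem_prod, eq_comm]
  rw [this, Measure.volume_eq_prod, Measure.prod_prod, Real.volume_singleton, zero_mul]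

lemma null_hline (c : ℝ) : volume {z : ℝ × ℝ | z.2 = c} = 0 := by
  have : {z : ℝ × ℝ | z.2 = c} = (Set.univ : Set ℝ) ×ˢ ({c} : Set ℝ) := by
    ext ⟨z1, z2⟩; simp [Set.mem_prod, eq_comm]
  rw [this, Measure.volume_eq_prod, Measure.prod_prod, Real.volume_singleton, mul_zero]

/-- The open quadrant at `p`. -/
def quad (p : ℝ × ℝ) : Set (ℝ × ℝ) := {z | p.1 < z.1 ∧ p.2 < z.2}

lemma measurableSet_quad (p : ℝ × ℝ) : MeasurableSet (quad p) := by
  unfold quad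
  rw [Set.setOf_and]
  exact (measurableSet_lt measurable_const measurable_fst).inter
    (measurableSet_lt measurable_const measurable_snd)

lemma vol_quarter (p : ℝ × ℝ) (θ : ℝ) :
    volume (unitSquare p θ ∩ quad p) = 1/4 := by
  set S := unitSquare p θ with hS
  set Q0 : Set (ℝ × ℝ) := {z | p.1 < z.1 ∧ p.2 < z.2} with hQ0
  set Q1 : Set (ℝ × ℝ) := {z | z.1 < p.1 ∧ p.2 < z.2} with hQ1
  set Q2 : Set (ℝ × ℝ) := {z | z.1 < p.1 ∧ z.2 < p.2} with hQ2
  set Q3 : Set (ℝ × ℝ) := {z | p.1 < z.1 ∧ z.2 < p.2} with hQ3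
  have hmS : MeasurableSet S := measurableSet_unitSquare p θ
  have pre1 : rot p ⁻¹' (S ∩ Q1) = S ∩ Q0 := by
    ext z
    simp only [Set.mem_preimage, Set.mem_inter_iff, hQ0, hQ1, Set.mem_setOf_eq]
    rw [hS, rot_mem_unitSquare]
    simp only [rot]
    constructor <;> rintro ⟨h1, h2, h3⟩ <;> exact ⟨h1, by linarith, by linarith⟩
  have pre2 : rot p ⁻¹' (S ∩ Q2) = S ∩ Q1 := by
    ext z
    simp only [Set.mem_preimage, Set.mem_inter_iff, hQ1, hQ2, Set.mem_setOf_eq]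
    rw [hS, rot_mem_unitSquare]
    simp only [rot]
    constructor <;> rintro ⟨h1, h2, h3⟩ <;> exact ⟨h1, by linarith, by linarith⟩
  have pre3 : rot p ⁻¹' (S ∩ Q3) = S ∩ Q2 := by
    ext z
    simp only [Set.mem_preimage, Set.mem_inter_iff, hQ2, hQ3, Set.mem_setOf_eq]
    rw [hS, rot_mem_unitSquare]
    simp only [rot]
    constructor <;> rintro ⟨h1, h2, h3⟩ <;> exact ⟨h1, by linarith, by linarith⟩
  have v1 : volume (S ∩ Q1) = volume (S ∩ Q0) := by
    rw [← vol_preimage_rot p (S ∩ Q1), pre1]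
  have v2 : volume (S ∩ Q2) = volume (S ∩ Q1) := by
    rw [← vol_preimage_rot p (S ∩ Q2), pre2]
  have v3 : volume (S ∩ Q3) = volume (S ∩ Q2) := by
    rw [← vol_preimage_rot p (S ∩ Q3), pre3]
  -- measurability of quadrants
  have mlt1 : ∀ c : ℝ, MeasurableSet {z : ℝ × ℝ | z.1 < c} :=
    fun c => measurableSet_lt measurable_fst measurable_const
  have mgt1 : ∀ c : ℝ, MeasurableSet {z : ℝ × ℝ | c < z.1} :=
    fun c => measurableSet_lt measurable_const measurable_fst
  have mlt2 : ∀ c : ℝ, MeasurableSet {z : ℝ × ℝ | z.2 < c} :=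
    fun c => measurableSet_lt measurable_snd measurable_const
  have mgt2 : ∀ c : ℝ, MeasurableSet {z : ℝ × ℝ | c < z.2} :=
    fun c => measurableSet_lt measurable_const measurable_snd
  have mQ0 : MeasurableSet Q0 := by rw [hQ0, Set.setOf_and]; exact (mgt1 p.1).inter (mgt2 p.2)
  have mQ1 : MeasurableSet Q1 := by rw [hQ1, Set.setOf_and]; exact (mlt1 p.1).inter (mgt2 p.2)
  have mQ2 : MeasurableSet Q2 := by rw [hQ2, Set.setOf_and]; exact (mlt1 p.1).inter (mlt2 p.2)
  have mQ3 : MeasurableSet Q3 := by rw [hQ3, Set.setOf_and]; exact (mgt1 p.1).inter (mlt2 p.2)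
  -- decomposition of S
  set U : Set (ℝ × ℝ) := Q0 ∪ Q1 ∪ Q2 ∪ Q3 with hU
  have mU : MeasurableSet U := ((mQ0.union mQ1).union mQ2).union mQ3
  have hdiff : S \ U ⊆ {z : ℝ × ℝ | z.1 = p.1} ∪ {z : ℝ × ℝ | z.2 = p.2} := by
    intro z hz
    by_contra hc
    simp only [Set.mem_union, Set.mem_setOf_eq, not_or] at hc
    obtain ⟨hc1, hc2⟩ := hc
    rcases lt_or_gt_of_ne hc1 with h1 | h1 <;> rcases lt_or_gt_of_ne hc2 with h2 | h2 <;>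
      exact hz.2 (by simp only [hU, Set.mem_union, hQ0, hQ1, hQ2, hQ3, Set.mem_setOf_eq]; tauto)
  have hnull : volume (S \ U) = 0 := by
    apply measure_mono_null hdiff
    exact le_antisymm (le_trans (measure_union_le _ _) (by rw [null_vline, null_hline, add_zero]))
      zero_le
  have hSU : volume (S ∩ U) = volume S := by
    have := measure_inter_add_diff S mU (μ := volume)
    rw [hnull, add_zero] at this; exact this
  -- S ∩ U = disjoint union
  have hsplit : S ∩ U = (S ∩ Q0) ∪ ((S ∩ Q1) ∪ ((S ∩ Q2) ∪ (S ∩ Q3))) := by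
    rw [hU]; ext z; simp only [Set.mem_inter_iff, Set.mem_union]; tauto
  have hd01 : Disjoint (S ∩ Q0) ((S ∩ Q1) ∪ ((S ∩ Q2) ∪ (S ∩ Q3))) := by
    rw [Set.disjoint_left]
    rintro z ⟨hzS, hz0⟩ hz
    obtain ⟨h1, h2⟩ := hz0
    rcases hz with ⟨_, h3, _⟩ | ⟨⟨_, h3, _⟩ | ⟨_, _, h3⟩⟩ <;> linarith
  have hd12 : Disjoint (S ∩ Q1) ((S ∩ Q2) ∪ (S ∩ Q3)) := by
    rw [Set.disjoint_left]
    rintro z ⟨hzS, h1, h2⟩ hz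
    rcases hz with ⟨_, _, h3⟩ | ⟨_, h3, _⟩ <;> linarith
  have hd23 : Disjoint (S ∩ Q2) (S ∩ Q3) := by
    rw [Set.disjoint_left]
    rintro z ⟨hzS, h1, h2⟩ ⟨_, h3, _⟩
    linarith
  have hvol : volume S = volume (S ∩ Q0) + volume (S ∩ Q1) + volume (S ∩ Q2) + volume (S ∩ Q3) := by
    rw [← hSU, hsplit, measure_union hd01 ((hmS.inter mQ1).union ((hmS.inter mQ2).union (hmS.inter mQ3))),
      measure_union hd12 ((hmS.inter mQ2).union (hmS.inter mQ3)), measure_union hd23 (hmS.inter mQ3)]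
    ring
  have h4 : (4 : ℝ≥0∞) * volume (S ∩ Q0) = 1 := by
    have e : (4 : ℝ≥0∞) * volume (S ∩ Q0)
        = volume (S ∩ Q0) + volume (S ∩ Q0) + volume (S ∩ Q0) + volume (S ∩ Q0) := by ring
    have e2 := hvol
    rw [v3, v2, v1, hS, vol_unitSquare] at e2
    rw [e]
    exact e2.symm
  have : quad p = Q0 := rfl
  rw [this]
  exact (ENNReal.eq_div_iff (by norm_num) (by norm_num)).2 h4
section Chunk2
variable {a b : ℝ} {p : ℝ × ℝ} {θ : ℝ}

lemma ofReal_quarter : ENNReal.ofReal ((1:ℝ)/4) = 1/4 := by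
  rw [ENNReal.ofReal_div_of_pos (by norm_num)]
  norm_num

lemma vol_IccIcc (x1 x2 y1 y2 : ℝ) :
    volume ((Set.Icc x1 x2) ×ˢ (Set.Icc y1 y2)) = ENNReal.ofReal (x2 - x1) * ENNReal.ofReal (y2 - y1) := by
  rw [Measure.volume_eq_prod, Measure.prod_prod, Real.volume_Icc, Real.volume_Icc]

lemma vol_IcoIcc (x1 x2 y1 y2 : ℝ) :
    volume ((Set.Ico x1 x2) ×ˢ (Set.Icc y1 y2)) = ENNReal.ofReal (x2 - x1) * ENNReal.ofReal (y2 - y1) := by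
  rw [Measure.volume_eq_prod, Measure.prod_prod, Real.volume_Ico, Real.volume_Icc]

lemma vol_IccIco (x1 x2 y1 y2 : ℝ) :
    volume ((Set.Icc x1 x2) ×ˢ (Set.Ico y1 y2)) = ENNReal.ofReal (x2 - x1) * ENNReal.ofReal (y2 - y1) := by
  rw [Measure.volume_eq_prod, Measure.prod_prod, Real.volume_Icc, Real.volume_Ico]

lemma sqrt2_sq : Real.sqrt 2 ^ 2 = 2 := Real.sq_sqrt (by norm_num)

lemma sqrt2_ge : (4:ℝ)/3 ≤ Real.sqrt 2 := by
  nlinarith [sqrt2_sq, Real.sqrt_nonneg 2]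

lemma sqrt2_le : Real.sqrt 2 ≤ 3/2 := by
  nlinarith [sqrt2_sq, Real.sqrt_nonneg 2]

lemma measurableSet_table (a b : ℝ) :
    MeasurableSet ((Set.Icc (0:ℝ) a) ×ˢ (Set.Icc (0:ℝ) b)) :=
  measurableSet_Icc.prod measurableSet_Icc

/-- Case A : `1/2 ≤ p.1 ≤ a/2`. Strict inequality. -/
lemma caseA (ha : 1 ≤ a) (hb : 1 ≤ b) (hx2 : p.1 ≤ a/2) (hy1 : 0 ≤ p.2) (hy2 : p.2 ≤ b/2)
    (hx : 1/2 ≤ p.1) :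
    1/4 < volume (unitSquare p θ ∩ (Set.Icc (0:ℝ) a) ×ˢ (Set.Icc (0:ℝ) b)) := by
  have hs2 := sqrt2_sq
  have hsge := sqrt2_ge
  have hsle := sqrt2_le
  set h : ℝ := Real.sqrt 2 / 4 with hh
  set c1 : ℝ := 1/4 - Real.sqrt 2 / 8 with hc1
  clear_value h c1
  have hhb1 : 1/4 ≤ h := by rw [hh]; linarith
  have hhb2 : h ≤ 3/8 := by rw [hh]; linarith
  have hcb1 : 1/16 ≤ c1 := by rw [hc1]; linarith
  have hcb2 : c1 ≤ 1/12 := by rw [hc1]; linarith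
  have hkey : h + 2*c1 = 1/2 := by rw [hh, hc1]; ring
  set R1 : Set (ℝ × ℝ) := (Set.Ico (p.1 - h) (p.1 + h)) ×ˢ (Set.Icc p.2 (p.2 + h)) with hR1
  set R2 : Set (ℝ × ℝ) := (Set.Icc (p.1 + h) (p.1 + h + c1)) ×ˢ (Set.Icc p.2 (p.2 + c1)) with hR2
  have hsub1 : R1 ⊆ unitSquare p θ ∩ (Set.Icc (0:ℝ) a) ×ˢ (Set.Icc (0:ℝ) b) := by
    rintro z ⟨hz1, hz2⟩
    simp only [Set.mem_Ico, Set.mem_Icc] at hz1 hz2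
    obtain ⟨h11, h12⟩ := hz1
    obtain ⟨h21, h22⟩ := hz2
    refine ⟨square_subset (by rw [abs_le]; constructor <;> linarith)
      (by rw [abs_le]; constructor <;> linarith), ?_⟩
    exact ⟨⟨by linarith, by linarith⟩, ⟨by linarith, by linarith⟩⟩
  have hsub2 : R2 ⊆ unitSquare p θ ∩ (Set.Icc (0:ℝ) a) ×ˢ (Set.Icc (0:ℝ) b) := by
    rintro z ⟨hz1, hz2⟩
    simp only [Set.mem_Icc] at hz1 hz2
    obtain ⟨h11, h12⟩ := hz1
    obtain ⟨h21, h22⟩ := hz2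
    refine ⟨diamond_subset ?_, ⟨⟨by linarith, by linarith⟩, ⟨by linarith, by linarith⟩⟩⟩
    rw [abs_of_nonneg (by linarith), abs_of_nonneg (by linarith)]
    linarith
  have hdisj : Disjoint R1 R2 := by
    rw [Set.disjoint_left]
    rintro z ⟨hz1, _⟩ ⟨hw1, _⟩
    simp only [Set.mem_Ico, Set.mem_Icc] at hz1 hw1
    linarith [hz1.2, hw1.1]
  
  have hmR2 : MeasurableSet R2 := measurableSet_Icc.prod measurableSet_Icc
  calc (1/4 : ℝ≥0∞) < ENNReal.ofReal (2*h) * ENNReal.ofReal h + ENNReal.ofReal c1 * ENNReal.ofReal c1 := by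
        rw [← ENNReal.ofReal_mul (by linarith), ← ENNReal.ofReal_mul (by linarith),
          ← ENNReal.ofReal_add (by nlinarith) (by nlinarith), ← ofReal_quarter]
        rw [ENNReal.ofReal_lt_ofReal_iff (by nlinarith)]
        nlinarith
    _ = volume R1 + volume R2 := by
        rw [hR1, hR2, vol_IcoIcc, vol_IccIcc]
        ring_nf
    _ = volume (R1 ∪ R2) := (measure_union hdisj hmR2).symm
    _ ≤ volume (unitSquare p θ ∩ (Set.Icc (0:ℝ) a) ×ˢ (Set.Icc (0:ℝ) b)) :=
        measure_mono (Set.union_subset hsub1 hsub2)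
end Chunk2
section Chunk3
variable {a b : ℝ} {p : ℝ × ℝ} {θ : ℝ}

/-- Case A' : `1/2 ≤ p.2 ≤ b/2`. Strict inequality. -/
lemma caseA' (ha : 1 ≤ a) (hb : 1 ≤ b) (hx1 : 0 ≤ p.1) (hx2 : p.1 ≤ a/2) (hy2 : p.2 ≤ b/2)
    (hy : 1/2 ≤ p.2) :
    1/4 < volume (unitSquare p θ ∩ (Set.Icc (0:ℝ) a) ×ˢ (Set.Icc (0:ℝ) b)) := by
  have hs2 := sqrt2_sq
  have hsge := sqrt2_ge
  have hsle := sqrt2_le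
  set h : ℝ := Real.sqrt 2 / 4 with hh
  set c1 : ℝ := 1/4 - Real.sqrt 2 / 8 with hc1
  clear_value h c1
  have hhb1 : 1/4 ≤ h := by rw [hh]; linarith
  have hhb2 : h ≤ 3/8 := by rw [hh]; linarith
  have hcb1 : 1/16 ≤ c1 := by rw [hc1]; linarith
  have hcb2 : c1 ≤ 1/12 := by rw [hc1]; linarith
  have hkey : h + 2*c1 = 1/2 := by rw [hh, hc1]; ring
  set R1 : Set (ℝ × ℝ) := (Set.Icc p.1 (p.1 + h)) ×ˢ (Set.Ico (p.2 - h) (p.2 + h)) with hR1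
  set R2 : Set (ℝ × ℝ) := (Set.Icc p.1 (p.1 + c1)) ×ˢ (Set.Icc (p.2 + h) (p.2 + h + c1)) with hR2
  have hsub1 : R1 ⊆ unitSquare p θ ∩ (Set.Icc (0:ℝ) a) ×ˢ (Set.Icc (0:ℝ) b) := by
    rintro z ⟨hz1, hz2⟩
    simp only [Set.mem_Ico, Set.mem_Icc] at hz1 hz2
    obtain ⟨h11, h12⟩ := hz1
    obtain ⟨h21, h22⟩ := hz2
    refine ⟨square_subset (by rw [abs_le]; constructor <;> linarith)
      (by rw [abs_le]; constructor <;> linarith), ?_⟩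
    exact ⟨⟨by linarith, by linarith⟩, ⟨by linarith, by linarith⟩⟩
  have hsub2 : R2 ⊆ unitSquare p θ ∩ (Set.Icc (0:ℝ) a) ×ˢ (Set.Icc (0:ℝ) b) := by
    rintro z ⟨hz1, hz2⟩
    simp only [Set.mem_Icc] at hz1 hz2
    obtain ⟨h11, h12⟩ := hz1
    obtain ⟨h21, h22⟩ := hz2
    refine ⟨diamond_subset ?_, ⟨⟨by linarith, by linarith⟩, ⟨by linarith, by linarith⟩⟩⟩
    rw [abs_of_nonneg (by linarith), abs_of_nonneg (by linarith)]
    linarith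
  have hdisj : Disjoint R1 R2 := by
    rw [Set.disjoint_left]
    rintro z ⟨_, hz2⟩ ⟨_, hw2⟩
    simp only [Set.mem_Ico, Set.mem_Icc] at hz2 hw2
    linarith [hz2.2, hw2.1]
  have hmR2 : MeasurableSet R2 := measurableSet_Icc.prod measurableSet_Icc
  calc (1/4 : ℝ≥0∞) < ENNReal.ofReal h * ENNReal.ofReal (2*h) + ENNReal.ofReal c1 * ENNReal.ofReal c1 := by
        rw [← ENNReal.ofReal_mul (by linarith), ← ENNReal.ofReal_mul (by linarith),
          ← ENNReal.ofReal_add (by nlinarith) (by nlinarith), ← ofReal_quarter]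
        rw [ENNReal.ofReal_lt_ofReal_iff (by nlinarith)]
        nlinarith
    _ = volume R1 + volume R2 := by
        rw [hR1, hR2, vol_IccIco, vol_IccIcc]
        ring_nf
    _ = volume (R1 ∪ R2) := (measure_union hdisj hmR2).symm
    _ ≤ volume (unitSquare p θ ∩ (Set.Icc (0:ℝ) a) ×ˢ (Set.Icc (0:ℝ) b)) :=
        measure_mono (Set.union_subset hsub1 hsub2)

/-- Case B2 : both coordinates in `[1 - √2/2, 1/2]`. Strict inequality. -/
lemma caseB2 (ha : 1 ≤ a) (hb : 1 ≤ b) (hx1 : 1 - Real.sqrt 2 / 2 ≤ p.1) (hx2 : p.1 ≤ 1/2)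
    (hy1 : 1 - Real.sqrt 2 / 2 ≤ p.2) (hy2 : p.2 ≤ 1/2) :
    1/4 < volume (unitSquare p θ ∩ (Set.Icc (0:ℝ) a) ×ˢ (Set.Icc (0:ℝ) b)) := by
  have hs2 := sqrt2_sq
  have hsge := sqrt2_ge
  have hsle := sqrt2_le
  set h : ℝ := Real.sqrt 2 / 4 with hh
  set d0 : ℝ := 1 - Real.sqrt 2 / 2 with hd0
  clear_value h d0
  have hhb1 : 1/4 ≤ h := by rw [hh]; linarith
  have hhb2 : h ≤ 3/8 := by rw [hh]; linarith
  have hdb1 : 1/4 ≤ d0 := by rw [hd0]; linarith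
  have hdb2 : d0 ≤ 1/3 := by rw [hd0]; linarith
  have hdh : d0 ≤ h := by rw [hd0, hh]; linarith
  rw [hd0] at hx1 hy1
  set R : Set (ℝ × ℝ) := (Set.Icc (p.1 - d0) (p.1 + h)) ×ˢ (Set.Icc (p.2 - d0) (p.2 + h)) with hR
  have hsub : R ⊆ unitSquare p θ ∩ (Set.Icc (0:ℝ) a) ×ˢ (Set.Icc (0:ℝ) b) := by
    rintro z ⟨hz1, hz2⟩
    simp only [Set.mem_Icc] at hz1 hz2
    obtain ⟨h11, h12⟩ := hz1
    obtain ⟨h21, h22⟩ := hz2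
    refine ⟨square_subset (by rw [abs_le]; constructor <;> linarith)
      (by rw [abs_le]; constructor <;> linarith), ?_⟩
    refine ⟨⟨by rw [hd0] at h11; linarith, by linarith⟩, ⟨by rw [hd0] at h21; linarith, by linarith⟩⟩
  calc (1/4 : ℝ≥0∞) < ENNReal.ofReal (h + d0) * ENNReal.ofReal (h + d0) := by
        rw [← ENNReal.ofReal_mul (by linarith), ← ofReal_quarter,
          ENNReal.ofReal_lt_ofReal_iff (by nlinarith)]
        nlinarith
    _ = volume R := by rw [hR, vol_IccIcc]; ring_nf
    _ ≤ volume (unitSquare p θ ∩ (Set.Icc (0:ℝ) a) ×ˢ (Set.Icc (0:ℝ) b)) := measure_mono hsub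

/-- Equality at the corner. -/
lemma corner_eq (ha : 1 ≤ a) (hb : 1 ≤ b) (hx : p.1 = 0) (hy : p.2 = 0) :
    volume (unitSquare p θ ∩ (Set.Icc (0:ℝ) a) ×ˢ (Set.Icc (0:ℝ) b)) = 1/4 := by
  have hbound : ∀ z ∈ unitSquare p θ, z.1 - p.1 ≤ 3/4 ∧ z.2 - p.2 ≤ 3/4 := by
    intro z hz
    have hd := disk_bound hz
    constructor <;> nlinarith [sq_nonneg (z.1 - p.1), sq_nonneg (z.2 - p.2)]
  have heq : unitSquare p θ ∩ (Set.Icc (0:ℝ) a) ×ˢ (Set.Icc (0:ℝ) b)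
      = unitSquare p θ ∩ {z : ℝ × ℝ | p.1 ≤ z.1 ∧ p.2 ≤ z.2} := by
    ext z
    simp only [Set.mem_inter_iff, Set.mem_prod, Set.mem_Icc, Set.mem_setOf_eq]
    constructor
    · rintro ⟨hS, ⟨hz1, _⟩, hz2, _⟩
      exact ⟨hS, by linarith, by linarith⟩
    · rintro ⟨hS, hz1, hz2⟩
      obtain ⟨e1, e2⟩ := hbound z hS
      exact ⟨hS, ⟨by linarith, by linarith⟩, by linarith, by linarith⟩
  rw [heq]
  apply le_antisymm
  · have hsub : unitSquare p θ ∩ {z : ℝ × ℝ | p.1 ≤ z.1 ∧ p.2 ≤ z.2}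
        ⊆ (unitSquare p θ ∩ quad p) ∪ ({z : ℝ × ℝ | z.1 = p.1} ∪ {z : ℝ × ℝ | z.2 = p.2}) := by
      rintro z ⟨hS, hz1, hz2⟩
      rcases eq_or_lt_of_le hz1 with h1 | h1
      · exact Or.inr (Or.inl h1.symm)
      rcases eq_or_lt_of_le hz2 with h2 | h2
      · exact Or.inr (Or.inr h2.symm)
      exact Or.inl ⟨hS, h1, h2⟩
    calc volume (unitSquare p θ ∩ {z : ℝ × ℝ | p.1 ≤ z.1 ∧ p.2 ≤ z.2})
        ≤ volume ((unitSquare p θ ∩ quad p) ∪ ({z : ℝ × ℝ | z.1 = p.1} ∪ {z : ℝ × ℝ | z.2 = p.2})) :=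
          measure_mono hsub
      _ ≤ volume (unitSquare p θ ∩ quad p) + volume ({z : ℝ × ℝ | z.1 = p.1} ∪ {z : ℝ × ℝ | z.2 = p.2}) :=
          measure_union_le _ _
      _ ≤ volume (unitSquare p θ ∩ quad p) + (volume {z : ℝ × ℝ | z.1 = p.1} + volume {z : ℝ × ℝ | z.2 = p.2}) :=
          add_le_add le_rfl (measure_union_le _ _)
      _ = 1/4 := by rw [vol_quarter, null_vline, null_hline, add_zero, add_zero]
  · rw [← vol_quarter p θ]
    apply measure_mono
    rintro z ⟨hS, hz1, hz2⟩
    exact ⟨hS, le_of_lt hz1, le_of_lt hz2⟩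
end Chunk3
section Chunk4
variable {a b : ℝ} {p : ℝ × ℝ} {θ : ℝ}

lemma measurable_rot (p : ℝ × ℝ) : Measurable (rot p) := by unfold rot; fun_prop

lemma measurable_rotInv (p : ℝ × ℝ) : Measurable (rotInv p) := by unfold rotInv; fun_prop

lemma sqrthalf : ∀ t : ℝ, t^2 ≤ 1/2 → t ≤ Real.sqrt 2 / 2 := by
  intro t ht
  nlinarith [sqrt2_sq, Real.sqrt_nonneg 2]

set_option maxHeartbeats 2000000 in
/-- Case B1 : `p.1 ≤ 1/2`, `p.2 ≤ 1 - √2/2`. -/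
lemma caseB1 (ha : 1 ≤ a) (hb : 1 ≤ b) (hx1 : 0 ≤ p.1) (hx2 : p.1 ≤ 1/2)
    (hy1 : 0 ≤ p.2) (hyd : p.2 ≤ 1 - Real.sqrt 2 / 2) :
    1/4 ≤ volume (unitSquare p θ ∩ (Set.Icc (0:ℝ) a) ×ˢ (Set.Icc (0:ℝ) b)) ∧
      (¬(p.1 = 0 ∧ p.2 = 0) →
        1/4 < volume (unitSquare p θ ∩ (Set.Icc (0:ℝ) a) ×ˢ (Set.Icc (0:ℝ) b))) := by
  have hs2 := sqrt2_sq
  have hsge := sqrt2_ge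
  have hsle := sqrt2_le
  set S := unitSquare p θ with hSdef
  set Tb := (Set.Icc (0:ℝ) a) ×ˢ (Set.Icc (0:ℝ) b) with hTdef
  set Q := quad p with hQdef
  have mS : MeasurableSet S := measurableSet_unitSquare p θ
  have mT : MeasurableSet Tb := measurableSet_table a b
  have mQ : MeasurableSet Q := measurableSet_quad p
  set E := (S ∩ Q) \ Tb with hEdef
  set F1 := (S ∩ Q) ∩ Tb with hF1def
  set F2 := rotInv p ⁻¹' E with hF2def
  have mE : MeasurableSet E := (mS.inter mQ).diff mT
  have mF1 : MeasurableSet F1 := (mS.inter mQ).inter mT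
  have mF2 : MeasurableSet F2 := measurable_rotInv p mE
  -- pointwise facts about F2
  have hF2 : ∀ z ∈ F2, (z ∈ S ∧ z ∈ Tb) ∧ z.1 < p.1 ∧ p.2 + 1/2 < z.2 := by
    intro z hz
    have hw : rotInv p z ∈ E := hz
    obtain ⟨⟨hwS, hwQ⟩, hwT⟩ := hw
    have hw1 : (rotInv p z).1 = z.2 - p.2 + p.1 := rfl
    have hw2 : (rotInv p z).2 = p.1 + p.2 - z.1 := rfl
    have hq1 : p.1 < z.2 - p.2 + p.1 := by
      have := hwQ.1; rwa [hw1] at this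
    have hq2 : p.2 < p.1 + p.2 - z.1 := by
      have := hwQ.2; rwa [hw2] at this
    have hd := disk_bound hwS
    rw [hw1, hw2] at hd
    have hd' : (z.2 - p.2)^2 + (p.1 - z.1)^2 ≤ 1/2 := by nlinarith [hd]
    have hled : z.2 - p.2 ≤ Real.sqrt 2 / 2 := sqrthalf _ (by nlinarith)
    have hledy : p.1 - z.1 ≤ Real.sqrt 2 / 2 := sqrthalf _ (by nlinarith)
    -- w ∉ Tb forces a < w.1
    have hwa : a < z.2 - p.2 + p.1 := by
      by_contra hle
      push_neg at hle
      apply hwT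
      rw [hTdef]
      refine ⟨?_, ?_⟩ <;> rw [Set.mem_Icc]
      · rw [hw1]; constructor <;> linarith
      · rw [hw2]; constructor <;> linarith
    -- hence the horizontal displacement of w exceeds 1 - p.1 ≥ 1/2
    have hdx : 1 - p.1 < z.2 - p.2 := by linarith
    have hdy : p.1 - z.1 < p.1 := by nlinarith
    refine ⟨⟨?_, ?_⟩, by linarith, by linarith⟩
    · have hrS : rot p (rotInv p z) ∈ unitSquare p θ := rot_mem_unitSquare.2 hwS
      rwa [rot_rotInv] at hrS
    · rw [hTdef]
      refine ⟨?_, ?_⟩ <;> rw [Set.mem_Icc]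
      · constructor <;> linarith
      · constructor <;> linarith
  have hvol2 : volume F2 = volume E := vol_preimage_rotInv p E
  have hbase : volume F1 + volume E = 1/4 := by
    rw [hF1def, hEdef]
    rw [measure_inter_add_diff (S ∩ Q) mT]
    exact vol_quarter p θ
  have hdisj12 : Disjoint F1 F2 := by
    rw [Set.disjoint_left]
    rintro z ⟨⟨_, hzQ⟩, _⟩ hz2
    exact absurd (hF2 z hz2).2.1 (not_lt.2 (le_of_lt hzQ.1))
  have hsub12 : F1 ∪ F2 ⊆ S ∩ Tb := by
    rintro z (⟨⟨hzS, _⟩, hzT⟩ | hz2)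
    · exact ⟨hzS, hzT⟩
    · exact (hF2 z hz2).1
  have hge : 1/4 ≤ volume (S ∩ Tb) := by
    calc (1/4 : ℝ≥0∞) = volume F1 + volume E := hbase.symm
      _ = volume F1 + volume F2 := by rw [hvol2]
      _ = volume (F1 ∪ F2) := (measure_union hdisj12 mF2).symm
      _ ≤ volume (S ∩ Tb) := measure_mono hsub12
  refine ⟨hge, ?_⟩
  intro hne
  -- strict case : add a third disjoint piece F3
  have hstep : ∃ F3 : Set (ℝ × ℝ), MeasurableSet F3 ∧ F3 ⊆ S ∩ Tb ∧
      Disjoint (F1 ∪ F2) F3 ∧ 0 < volume F3 := by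
    rcases eq_or_lt_of_le hx1 with hp1 | hp1
    · -- p.1 = 0, so p.2 > 0
      have hp2 : 0 < p.2 := by
        rcases eq_or_lt_of_le hy1 with h2 | h2
        · exact absurd ⟨hp1.symm, h2.symm⟩ hne
        · exact h2
      obtain ⟨δ, hδ1, hδa, hδb⟩ : ∃ δ : ℝ, 0 < δ ∧ δ ≤ p.2 ∧ δ ≤ 1/4 :=
        ⟨min p.2 (1/4), lt_min hp2 (by norm_num), min_le_left _ _, min_le_right _ _⟩
      refine ⟨(Set.Icc p.1 (p.1 + δ)) ×ˢ (Set.Ico (p.2 - δ) p.2), measurableSet_Icc.prod measurableSet_Ico, ?_, ?_, ?_⟩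
      · rintro z ⟨hz1, hz2⟩
        simp only [Set.mem_Icc, Set.mem_Ico] at hz1 hz2
        obtain ⟨h11, h12⟩ := hz1
        obtain ⟨h21, h22⟩ := hz2
        constructor
        · exact square_subset (by rw [abs_le]; constructor <;> linarith)
            (by rw [abs_le]; constructor <;> linarith)
        · rw [hTdef]
          refine ⟨?_, ?_⟩ <;> rw [Set.mem_Icc]
          · constructor <;> linarith
          · constructor <;> linarith
      · rw [Set.disjoint_left]
        rintro z (⟨⟨_, hzQ⟩, _⟩ | hz2) ⟨hz1', hz2'⟩
        · simp only [Set.mem_Ico] at hz2'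
          exact absurd hz2'.2 (not_lt.2 (le_of_lt hzQ.2))
        · simp only [Set.mem_Icc] at hz1'
          exact absurd hz1'.1 (not_le.2 ((hF2 z hz2).2.1))
      · rw [vol_IccIco]
        exact ENNReal.mul_pos (by rw [Ne, ENNReal.ofReal_eq_zero]; push_neg; linarith)
          (by rw [Ne, ENNReal.ofReal_eq_zero]; push_neg; linarith)
    · -- p.1 > 0
      obtain ⟨δ, hδ1, hδa, hδb⟩ : ∃ δ : ℝ, 0 < δ ∧ δ ≤ p.1 ∧ δ ≤ 1/4 :=
        ⟨min p.1 (1/4), lt_min hp1 (by norm_num), min_le_left _ _, min_le_right _ _⟩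
      refine ⟨(Set.Ico (p.1 - δ) p.1) ×ˢ (Set.Icc p.2 (p.2 + δ)), measurableSet_Ico.prod measurableSet_Icc, ?_, ?_, ?_⟩
      · rintro z ⟨hz1, hz2⟩
        simp only [Set.mem_Icc, Set.mem_Ico] at hz1 hz2
        obtain ⟨h11, h12⟩ := hz1
        obtain ⟨h21, h22⟩ := hz2
        constructor
        · exact square_subset (by rw [abs_le]; constructor <;> linarith)
            (by rw [abs_le]; constructor <;> linarith)
        · rw [hTdef]
          refine ⟨?_, ?_⟩ <;> rw [Set.mem_Icc]
          · constructor <;> linarith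
          · constructor <;> linarith
      · rw [Set.disjoint_left]
        rintro z (⟨⟨_, hzQ⟩, _⟩ | hz2) ⟨hz1', hz2'⟩
        · simp only [Set.mem_Ico] at hz1'
          exact absurd hz1'.2 (not_lt.2 (le_of_lt hzQ.1))
        · simp only [Set.mem_Icc] at hz2'
          exact absurd hz2'.2 (not_le.2 (by linarith [(hF2 z hz2).2.2]))
      · rw [vol_IcoIcc]
        exact ENNReal.mul_pos (by rw [Ne, ENNReal.ofReal_eq_zero]; push_neg; linarith)
          (by rw [Ne, ENNReal.ofReal_eq_zero]; push_neg; linarith)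
  obtain ⟨F3, mF3, hsub3, hdisj3, hpos3⟩ := hstep
  calc (1/4 : ℝ≥0∞) < 1/4 + volume F3 :=
        ENNReal.lt_add_right (by norm_num) (ne_of_gt hpos3)
    _ = volume (F1 ∪ F2) + volume F3 := by
        rw [measure_union hdisj12 mF2, hvol2, hbase]
    _ = volume ((F1 ∪ F2) ∪ F3) := (measure_union hdisj3 mF3).symm
    _ ≤ volume (S ∩ Tb) := measure_mono (Set.union_subset hsub12 hsub3)
end Chunk4
section Chunk5
variable {a b : ℝ} {p : ℝ × ℝ} {θ : ℝ}

set_option maxHeartbeats 2000000 in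
/-- Case B1' : `p.2 ≤ 1/2`, `p.1 ≤ 1 - √2/2`. -/
lemma caseB1' (ha : 1 ≤ a) (hb : 1 ≤ b) (hx1 : 0 ≤ p.1) (hxd : p.1 ≤ 1 - Real.sqrt 2 / 2)
    (hy1 : 0 ≤ p.2) (hy2 : p.2 ≤ 1/2) :
    1/4 ≤ volume (unitSquare p θ ∩ (Set.Icc (0:ℝ) a) ×ˢ (Set.Icc (0:ℝ) b)) ∧
      (¬(p.1 = 0 ∧ p.2 = 0) →
        1/4 < volume (unitSquare p θ ∩ (Set.Icc (0:ℝ) a) ×ˢ (Set.Icc (0:ℝ) b))) := by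
  have hs2 := sqrt2_sq
  have hsge := sqrt2_ge
  have hsle := sqrt2_le
  set S := unitSquare p θ with hSdef
  set Tb := (Set.Icc (0:ℝ) a) ×ˢ (Set.Icc (0:ℝ) b) with hTdef
  set Q := quad p with hQdef
  have mS : MeasurableSet S := measurableSet_unitSquare p θ
  have mT : MeasurableSet Tb := measurableSet_table a b
  have mQ : MeasurableSet Q := measurableSet_quad p
  set E := (S ∩ Q) \ Tb with hEdef
  set F1 := (S ∩ Q) ∩ Tb with hF1def
  set F2 := rot p ⁻¹' E with hF2def
  have mE : MeasurableSet E := (mS.inter mQ).diff mT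
  have mF1 : MeasurableSet F1 := (mS.inter mQ).inter mT
  have mF2 : MeasurableSet F2 := measurable_rot p mE
  -- pointwise facts about F2
  have hF2 : ∀ z ∈ F2, (z ∈ S ∧ z ∈ Tb) ∧ z.2 < p.2 ∧ p.1 + 1/2 < z.1 := by
    intro z hz
    have hw : rot p z ∈ E := hz
    obtain ⟨⟨hwS, hwQ⟩, hwT⟩ := hw
    have hw1 : (rot p z).1 = p.1 + p.2 - z.2 := rfl
    have hw2 : (rot p z).2 = z.1 - p.1 + p.2 := rfl
    have hq1 : p.1 < p.1 + p.2 - z.2 := by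
      have := hwQ.1; rwa [hw1] at this
    have hq2 : p.2 < z.1 - p.1 + p.2 := by
      have := hwQ.2; rwa [hw2] at this
    have hd := disk_bound hwS
    rw [hw1, hw2] at hd
    have hd' : (p.2 - z.2)^2 + (z.1 - p.1)^2 ≤ 1/2 := by nlinarith [hd]
    have hled : p.2 - z.2 ≤ Real.sqrt 2 / 2 := sqrthalf _ (by nlinarith)
    have hledy : z.1 - p.1 ≤ Real.sqrt 2 / 2 := sqrthalf _ (by nlinarith)
    -- w ∉ Tb forces b < w.2
    have hwb : b < z.1 - p.1 + p.2 := by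
      by_contra hle
      push_neg at hle
      apply hwT
      rw [hTdef]
      refine ⟨?_, ?_⟩ <;> rw [Set.mem_Icc]
      · rw [hw1]; constructor <;> linarith
      · rw [hw2]; constructor <;> linarith
    have hdy : 1 - p.2 < z.1 - p.1 := by linarith
    have hdx : p.2 - z.2 < p.2 := by nlinarith
    refine ⟨⟨?_, ?_⟩, by linarith, by linarith⟩
    · exact rot_mem_unitSquare.1 hwS
    · rw [hTdef]
      refine ⟨?_, ?_⟩ <;> rw [Set.mem_Icc]
      · constructor <;> linarith
      · constructor <;> linarith
  have hvol2 : volume F2 = volume E := vol_preimage_rot p E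
  have hbase : volume F1 + volume E = 1/4 := by
    rw [hF1def, hEdef]
    rw [measure_inter_add_diff (S ∩ Q) mT]
    exact vol_quarter p θ
  have hdisj12 : Disjoint F1 F2 := by
    rw [Set.disjoint_left]
    rintro z ⟨⟨_, hzQ⟩, _⟩ hz2
    exact absurd (hF2 z hz2).2.1 (not_lt.2 (le_of_lt hzQ.2))
  have hsub12 : F1 ∪ F2 ⊆ S ∩ Tb := by
    rintro z (⟨⟨hzS, _⟩, hzT⟩ | hz2)
    · exact ⟨hzS, hzT⟩
    · exact (hF2 z hz2).1
  have hge : 1/4 ≤ volume (S ∩ Tb) := by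
    calc (1/4 : ℝ≥0∞) = volume F1 + volume E := hbase.symm
      _ = volume F1 + volume F2 := by rw [hvol2]
      _ = volume (F1 ∪ F2) := (measure_union hdisj12 mF2).symm
      _ ≤ volume (S ∩ Tb) := measure_mono hsub12
  refine ⟨hge, ?_⟩
  intro hne
  have hstep : ∃ F3 : Set (ℝ × ℝ), MeasurableSet F3 ∧ F3 ⊆ S ∩ Tb ∧
      Disjoint (F1 ∪ F2) F3 ∧ 0 < volume F3 := by
    rcases eq_or_lt_of_le hy1 with hp2 | hp2
    · -- p.2 = 0, so p.1 > 0
      have hp1 : 0 < p.1 := by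
        rcases eq_or_lt_of_le hx1 with h2 | h2
        · exact absurd ⟨h2.symm, hp2.symm⟩ hne
        · exact h2
      obtain ⟨δ, hδ1, hδa, hδb⟩ : ∃ δ : ℝ, 0 < δ ∧ δ ≤ p.1 ∧ δ ≤ 1/4 :=
        ⟨min p.1 (1/4), lt_min hp1 (by norm_num), min_le_left _ _, min_le_right _ _⟩
      refine ⟨(Set.Ico (p.1 - δ) p.1) ×ˢ (Set.Icc p.2 (p.2 + δ)), measurableSet_Ico.prod measurableSet_Icc, ?_, ?_, ?_⟩
      · rintro z ⟨hz1, hz2⟩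
        simp only [Set.mem_Icc, Set.mem_Ico] at hz1 hz2
        obtain ⟨h11, h12⟩ := hz1
        obtain ⟨h21, h22⟩ := hz2
        constructor
        · exact square_subset (by rw [abs_le]; constructor <;> linarith)
            (by rw [abs_le]; constructor <;> linarith)
        · rw [hTdef]
          refine ⟨?_, ?_⟩ <;> rw [Set.mem_Icc]
          · constructor <;> linarith
          · constructor <;> linarith
      · rw [Set.disjoint_left]
        rintro z (⟨⟨_, hzQ⟩, _⟩ | hz2) ⟨hz1', hz2'⟩
        · simp only [Set.mem_Ico] at hz1'
          exact absurd hz1'.2 (not_lt.2 (le_of_lt hzQ.1))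
        · simp only [Set.mem_Ico] at hz1'
          exact absurd hz1'.2 (not_lt.2 (le_of_lt (by linarith [(hF2 z hz2).2.2])))
      · rw [vol_IcoIcc]
        exact ENNReal.mul_pos (by rw [Ne, ENNReal.ofReal_eq_zero]; push_neg; linarith)
          (by rw [Ne, ENNReal.ofReal_eq_zero]; push_neg; linarith)
    · -- p.2 > 0
      obtain ⟨δ, hδ1, hδa, hδb⟩ : ∃ δ : ℝ, 0 < δ ∧ δ ≤ p.2 ∧ δ ≤ 1/4 :=
        ⟨min p.2 (1/4), lt_min hp2 (by norm_num), min_le_left _ _, min_le_right _ _⟩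
      refine ⟨(Set.Icc p.1 (p.1 + δ)) ×ˢ (Set.Ico (p.2 - δ) p.2), measurableSet_Icc.prod measurableSet_Ico, ?_, ?_, ?_⟩
      · rintro z ⟨hz1, hz2⟩
        simp only [Set.mem_Icc, Set.mem_Ico] at hz1 hz2
        obtain ⟨h11, h12⟩ := hz1
        obtain ⟨h21, h22⟩ := hz2
        constructor
        · exact square_subset (by rw [abs_le]; constructor <;> linarith)
            (by rw [abs_le]; constructor <;> linarith)
        · rw [hTdef]
          refine ⟨?_, ?_⟩ <;> rw [Set.mem_Icc]
          · constructor <;> linarith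
          · constructor <;> linarith
      · rw [Set.disjoint_left]
        rintro z (⟨⟨_, hzQ⟩, _⟩ | hz2) ⟨hz1', hz2'⟩
        · simp only [Set.mem_Ico] at hz2'
          exact absurd hz2'.2 (not_lt.2 (le_of_lt hzQ.2))
        · simp only [Set.mem_Icc] at hz1'
          exact absurd hz1'.2 (not_le.2 (by linarith [(hF2 z hz2).2.2]))
      · rw [vol_IccIco]
        exact ENNReal.mul_pos (by rw [Ne, ENNReal.ofReal_eq_zero]; push_neg; linarith)
          (by rw [Ne, ENNReal.ofReal_eq_zero]; push_neg; linarith)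
  obtain ⟨F3, mF3, hsub3, hdisj3, hpos3⟩ := hstep
  calc (1/4 : ℝ≥0∞) < 1/4 + volume F3 :=
        ENNReal.lt_add_right (by norm_num) (ne_of_gt hpos3)
    _ = volume (F1 ∪ F2) + volume F3 := by
        rw [measure_union hdisj12 mF2, hvol2, hbase]
    _ = volume ((F1 ∪ F2) ∪ F3) := (measure_union hdisj3 mF3).symm
    _ ≤ volume (S ∩ Tb) := measure_mono (Set.union_subset hsub12 hsub3)
end Chunk5
section Chunk6

/-- Core dichotomy under the WLOG hypotheses `x ≤ a/2`, `y ≤ b/2`. -/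
lemma core (a b x y θ : ℝ) (ha : 1 ≤ a) (hb : 1 ≤ b) (hx1 : 0 ≤ x) (hx2 : x ≤ a/2)
    (hy1 : 0 ≤ y) (hy2 : y ≤ b/2) :
    volume (unitSquare (x, y) θ ∩ (Set.Icc (0:ℝ) a) ×ˢ (Set.Icc (0:ℝ) b)) ≥ 1/4 ∧
      (volume (unitSquare (x, y) θ ∩ (Set.Icc (0:ℝ) a) ×ˢ (Set.Icc (0:ℝ) b)) = 1/4 ↔
        (x = 0 ∨ x = a) ∧ (y = 0 ∨ y = b)) := by
  have hsge := sqrt2_ge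
  have hsle := sqrt2_le
  have hciff : ((x = 0 ∨ x = a) ∧ (y = 0 ∨ y = b)) ↔ (x = 0 ∧ y = 0) := by
    constructor
    · rintro ⟨h1 | h1, h2 | h2⟩ <;> constructor <;> first | assumption | linarith
    · rintro ⟨h1, h2⟩; exact ⟨Or.inl h1, Or.inl h2⟩
  by_cases hxh : 1/2 ≤ x
  · have hlt := caseA (p := (x, y)) (θ := θ) ha hb hx2 hy1 hy2 hxh
    refine ⟨le_of_lt hlt, ?_⟩
    constructor
    · intro h; exact absurd h.symm (ne_of_lt hlt)
    · intro h
      obtain ⟨h1, h2⟩ := hciff.1 h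
      linarith
  push_neg at hxh
  by_cases hyh : 1/2 ≤ y
  · have hlt := caseA' (p := (x, y)) (θ := θ) ha hb hx1 hx2 hy2 hyh
    refine ⟨le_of_lt hlt, ?_⟩
    constructor
    · intro h; exact absurd h.symm (ne_of_lt hlt)
    · intro h
      obtain ⟨h1, h2⟩ := hciff.1 h
      linarith
  push_neg at hyh
  by_cases hyd : y ≤ 1 - Real.sqrt 2 / 2
  · obtain ⟨hge, hstrict⟩ := caseB1 (p := (x, y)) (θ := θ) ha hb hx1 (le_of_lt hxh) hy1 hyd
    by_cases hcor : x = 0 ∧ y = 0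
    · have heq := corner_eq (p := (x, y)) (θ := θ) ha hb hcor.1 hcor.2
      exact ⟨le_of_eq heq.symm, by rw [heq]; simp [hciff, hcor]⟩
    · have hlt := hstrict hcor
      refine ⟨le_of_lt hlt, ?_⟩
      constructor
      · intro h; exact absurd h.symm (ne_of_lt hlt)
      · intro h; exact absurd (hciff.1 h) hcor
  push_neg at hyd
  by_cases hxd : x ≤ 1 - Real.sqrt 2 / 2
  · obtain ⟨hge, hstrict⟩ := caseB1' (p := (x, y)) (θ := θ) ha hb hx1 hxd hy1 (le_of_lt hyh)
    have hcor : ¬(x = 0 ∧ y = 0) := by rintro ⟨_, h2⟩; linarith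
    have hlt := hstrict hcor
    refine ⟨le_of_lt hlt, ?_⟩
    constructor
    · intro h; exact absurd h.symm (ne_of_lt hlt)
    · intro h; exact absurd (hciff.1 h) hcor
  push_neg at hxd
  have hlt := caseB2 (p := (x, y)) (θ := θ) ha hb (le_of_lt hxd) (le_of_lt hxh)
    (le_of_lt hyd) (le_of_lt hyh)
  refine ⟨le_of_lt hlt, ?_⟩
  constructor
  · intro h; exact absurd h.symm (ne_of_lt hlt)
  · intro h
    obtain ⟨h1, h2⟩ := hciff.1 h
    linarith

lemma vol_reflectX (a b x y θ : ℝ) :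
    volume (unitSquare (a - x, y) (Real.pi - θ) ∩ (Set.Icc (0:ℝ) a) ×ˢ (Set.Icc (0:ℝ) b))
      = volume (unitSquare (x, y) θ ∩ (Set.Icc (0:ℝ) a) ×ˢ (Set.Icc (0:ℝ) b)) := by
  have hpre : (fun z : ℝ × ℝ => ((-1) * z.1 + 0 * z.2 + a, 0 * z.1 + 1 * z.2 + 0)) ⁻¹'
      (unitSquare (a - x, y) (Real.pi - θ) ∩ (Set.Icc (0:ℝ) a) ×ˢ (Set.Icc (0:ℝ) b))
      = unitSquare (x, y) θ ∩ (Set.Icc (0:ℝ) a) ×ˢ (Set.Icc (0:ℝ) b) := by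
    ext z
    simp only [Set.mem_preimage, Set.mem_inter_iff, Set.mem_prod, Set.mem_Icc, unitSquare,
      Set.mem_setOf_eq]
    have e1 : Real.cos (Real.pi - θ) * (((-1) * z.1 + 0 * z.2 + a) - (a - x))
        + Real.sin (Real.pi - θ) * ((0 * z.1 + 1 * z.2 + 0) - y)
        = Real.cos θ * (z.1 - x) + Real.sin θ * (z.2 - y) := by
      rw [Real.cos_pi_sub, Real.sin_pi_sub]; ring
    have e2 : (-Real.sin (Real.pi - θ)) * (((-1) * z.1 + 0 * z.2 + a) - (a - x))
        + Real.cos (Real.pi - θ) * ((0 * z.1 + 1 * z.2 + 0) - y)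
        = -((-Real.sin θ) * (z.1 - x) + Real.cos θ * (z.2 - y)) := by
      rw [Real.cos_pi_sub, Real.sin_pi_sub]; ring
    rw [e1, e2, abs_neg]
    constructor
    · rintro ⟨hS, ⟨c1, c2⟩, c3, c4⟩
      exact ⟨hS, ⟨by linarith, by linarith⟩, by linarith, by linarith⟩
    · rintro ⟨hS, ⟨c1, c2⟩, c3, c4⟩
      exact ⟨hS, ⟨by linarith, by linarith⟩, by linarith, by linarith⟩
  rw [← hpre, vol_preimage_affine (-1) 0 0 1 a 0 (by norm_num)]

lemma vol_reflectY (a b x y θ : ℝ) :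
    volume (unitSquare (x, b - y) (-θ) ∩ (Set.Icc (0:ℝ) a) ×ˢ (Set.Icc (0:ℝ) b))
      = volume (unitSquare (x, y) θ ∩ (Set.Icc (0:ℝ) a) ×ˢ (Set.Icc (0:ℝ) b)) := by
  have hpre : (fun z : ℝ × ℝ => (1 * z.1 + 0 * z.2 + 0, 0 * z.1 + (-1) * z.2 + b)) ⁻¹'
      (unitSquare (x, b - y) (-θ) ∩ (Set.Icc (0:ℝ) a) ×ˢ (Set.Icc (0:ℝ) b))
      = unitSquare (x, y) θ ∩ (Set.Icc (0:ℝ) a) ×ˢ (Set.Icc (0:ℝ) b) := by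
    ext z
    simp only [Set.mem_preimage, Set.mem_inter_iff, Set.mem_prod, Set.mem_Icc, unitSquare,
      Set.mem_setOf_eq]
    have e1 : Real.cos (-θ) * ((1 * z.1 + 0 * z.2 + 0) - x)
        + Real.sin (-θ) * ((0 * z.1 + (-1) * z.2 + b) - (b - y))
        = Real.cos θ * (z.1 - x) + Real.sin θ * (z.2 - y) := by
      rw [Real.cos_neg, Real.sin_neg]; ring
    have e2 : (-Real.sin (-θ)) * ((1 * z.1 + 0 * z.2 + 0) - x)
        + Real.cos (-θ) * ((0 * z.1 + (-1) * z.2 + b) - (b - y))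
        = -((-Real.sin θ) * (z.1 - x) + Real.cos θ * (z.2 - y)) := by
      rw [Real.cos_neg, Real.sin_neg]; ring
    rw [e1, e2, abs_neg]
    constructor
    · rintro ⟨hS, ⟨c1, c2⟩, c3, c4⟩
      exact ⟨hS, ⟨by linarith, by linarith⟩, by linarith, by linarith⟩
    · rintro ⟨hS, ⟨c1, c2⟩, c3, c4⟩
      exact ⟨hS, ⟨by linarith, by linarith⟩, by linarith, by linarith⟩
  rw [← hpre, vol_preimage_affine 1 0 0 (-1) 0 b (by norm_num)]

end Chunk6

/-- For a square laptop on a table `T = [0,a] × [0,b]` with `a, b ≥ 1`, the footprint area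
is always at least `1/4`, with equality exactly when the center of the laptop is at a
corner of the table — for every orientation `θ`. -/
theorem main_theorem_square (a b : ℝ) (ha : 1 ≤ a) (hb : 1 ≤ b)
    (p : ℝ × ℝ) (hp : p ∈ Set.Icc (0 : ℝ) a ×ˢ Set.Icc (0 : ℝ) b) (θ : ℝ) :
    volume (unitSquare p θ ∩ Set.Icc (0 : ℝ) a ×ˢ Set.Icc (0 : ℝ) b) ≥ 1 / 4 ∧
      (volume (unitSquare p θ ∩ Set.Icc (0 : ℝ) a ×ˢ Set.Icc (0 : ℝ) b) = 1 / 4 ↔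
        (p.1 = 0 ∨ p.1 = a) ∧ (p.2 = 0 ∨ p.2 = b)) := by
  obtain ⟨x, y⟩ := p
  simp only [Set.mem_prod, Set.mem_Icc] at hp
  obtain ⟨⟨hx0, hxa⟩, hy0, hyb⟩ := hp
  rcases le_or_gt x (a/2) with hx | hx <;> rcases le_or_gt y (b/2) with hy | hy
  · exact core a b x y θ ha hb hx0 hx hy0 hy
  · -- reflect in y
    have h := core a b x (b - y) (-θ) ha hb hx0 hx (by linarith) (by linarith)
    rw [vol_reflectY a b x y θ] at h
    refine ⟨h.1, h.2.trans ?_⟩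
    constructor
    · rintro ⟨h1, h2 | h2⟩ <;> exact ⟨h1, by right; linarith⟩
    · rintro ⟨h1, h2 | h2⟩
      · exact ⟨h1, Or.inr (by linarith)⟩
      · exact ⟨h1, Or.inl (by linarith)⟩
  · -- reflect in x
    have h := core a b (a - x) y (Real.pi - θ) ha hb (by linarith) (by linarith) hy0 hy
    rw [vol_reflectX a b x y θ] at h
    refine ⟨h.1, h.2.trans ?_⟩
    constructor
    · rintro ⟨h1 | h1, h2⟩ <;> exact ⟨by right; linarith, h2⟩
    · rintro ⟨h1 | h1, h2⟩
      · exact ⟨Or.inr (by linarith), h2⟩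
      · exact ⟨Or.inl (by linarith), h2⟩
  · -- reflect in both
    have h := core a b (a - x) (b - y) (-(Real.pi - θ)) ha hb (by linarith) (by linarith)
      (by linarith) (by linarith)
    rw [vol_reflectY a b (a - x) y (Real.pi - θ), vol_reflectX a b x y θ] at h
    refine ⟨h.1, h.2.trans ?_⟩
    constructor
    · rintro ⟨h1 | h1, h2 | h2⟩ <;>
        exact ⟨by right; linarith, by right; linarith⟩
    · rintro ⟨h1 | h1, h2 | h2⟩
      · exact ⟨Or.inr (by linarith), Or.inr (by linarith)⟩
      · exact ⟨Or.inr (by linarith), Or.inl (by linarith)⟩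
      · exact ⟨Or.inl (by linarith), Or.inr (by linarith)⟩
      · exact ⟨Or.inl (by linarith), Or.inl (by linarith)⟩
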